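/- Let G be a Lie group acting smoothly on ℝⁿ and let f : ℝⁿ → ℝ be G-invariant, i.e., f(g·x) = f(x) for all g ∈ G and x ∈ ℝⁿ. If v ∈ ℝⁿ is a regular subgradient of f at x̄ ∈ ℝⁿ, then ⟨v, w⟩ = 0 for every w ∈ Im d(θ^(x̄))_e; that is, every regular subgradient of f at x̄ is orthogonal to the tangent space T_{x̄}(Gx̄) of the orbit of x̄. -/

import Mathlib

open scoped Manifold RealInnerProductSpace

/-- The tangent space `T_x(Gx) = Im d(θ^(x))_e` to the orbit of `x`, viewed as a linear
subspace of `ℝⁿ`, where `θ^(x) : G → ℝⁿ, g ↦ θ g x` is the orbit map. -/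
noncomputable def orbitTangent
    {E : Type*} [NormedAddCommGroup E] [NormedSpace ℝ E]
    {H : Type*} [TopologicalSpace H] (I : ModelWithCorners ℝ E H)
    {G : Type*} [TopologicalSpace G] [ChartedSpace H G] [Group G]
    {n : ℕ} (θ : G → EuclideanSpace ℝ (Fin n) → EuclideanSpace ℝ (Fin n))
    (x : EuclideanSpace ℝ (Fin n)) : Submodule ℝ (EuclideanSpace ℝ (Fin n)) :=
  LinearMap.range
    (ContinuousLinearMap.toLinearMap (show E →L[ℝ] EuclideanSpace ℝ (Fin n) from
      mfderiv I 𝓘(ℝ, EuclideanSpace ℝ (Fin n)) (fun g => θ g x) (1 : G)))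

/-- `v` is a regular (Fréchet) subgradient of `f` at `xbar`:
`f(x) ≥ f(xbar) + ⟪v, x − xbar⟫ − ε‖x − xbar‖` for `x` near `xbar`, for every `ε > 0`. -/
def IsRegularSubgradient {E : Type*} [NormedAddCommGroup E] [InnerProductSpace ℝ E]
    (f : E → ℝ) (xbar v : E) : Prop :=
  ∀ ε > (0 : ℝ), ∃ δ > (0 : ℝ), ∀ x : E, ‖x - xbar‖ ≤ δ →
    f x ≥ f xbar + ⟪v, x - xbar⟫ - ε * ‖x - xbar‖

/-- Auxiliary inequality: if `⟪v, a⟫ ≤ ε‖a‖` and `‖a - L w‖ ≤ ε‖w‖` with `0 ≤ ε ≤ 1`, then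
`⟪v, L w⟫ ≤ ε (‖L‖ + 1 + ‖v‖) ‖w‖`. -/
lemma inner_bound_aux {E F : Type*} [NormedAddCommGroup E] [NormedSpace ℝ E]
    [NormedAddCommGroup F] [InnerProductSpace ℝ F]
    (v a : F) (L : E →L[ℝ] F) (w : E) (ε : ℝ) (hε0 : 0 ≤ ε) (hε1 : ε ≤ 1)
    (h1 : ⟪v, a⟫ ≤ ε * ‖a‖) (h2 : ‖a - L w‖ ≤ ε * ‖w‖) :
    ⟪v, L w⟫ ≤ ε * (‖L‖ + 1 + ‖v‖) * ‖w‖ := by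
  have hna : ‖a‖ ≤ ‖L‖ * ‖w‖ + ε * ‖w‖ := by
    calc ‖a‖ = ‖L w + (a - L w)‖ := by congr 1; abel
    _ ≤ ‖L w‖ + ‖a - L w‖ := norm_add_le _ _
    _ ≤ ‖L‖ * ‖w‖ + ε * ‖w‖ := add_le_add (L.le_opNorm w) h2
  have h3 : ⟪v, L w⟫ = ⟪v, a⟫ - ⟪v, a - L w⟫ := by
    rw [← inner_sub_right]; congr 1; abel
  have h4 : |⟪v, a - L w⟫| ≤ ‖v‖ * (ε * ‖w‖) :=
    le_trans (abs_real_inner_le_norm v _)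
      (mul_le_mul_of_nonneg_left h2 (norm_nonneg v))
  have h5 : (0:ℝ) ≤ ‖w‖ := norm_nonneg w
  have h6 := (abs_le.mp h4).1
  have h9 : ε * (ε * ‖w‖) ≤ ε * ‖w‖ := by
    have := mul_le_mul_of_nonneg_right hε1 (mul_nonneg hε0 h5)
    linarith
  have h10 : ε * ‖a‖ ≤ ε * (‖L‖ * ‖w‖ + ε * ‖w‖) := mul_le_mul_of_nonneg_left hna hε0
  calc ⟪v, L w⟫ = ⟪v, a⟫ - ⟪v, a - L w⟫ := h3
  _ ≤ ε * ‖a‖ + ‖v‖ * (ε * ‖w‖) := by linarith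
  _ ≤ ε * (‖L‖ * ‖w‖ + ε * ‖w‖) + ‖v‖ * (ε * ‖w‖) := by linarith
  _ = ε * ‖L‖ * ‖w‖ + ε * (ε * ‖w‖) + ε * ‖v‖ * ‖w‖ := by ring
  _ ≤ ε * ‖L‖ * ‖w‖ + ε * ‖w‖ + ε * ‖v‖ * ‖w‖ := by linarith
  _ = ε * (‖L‖ + 1 + ‖v‖) * ‖w‖ := by ring

/-- Core analytic lemma: if two maps `ψ, ψ'` into `ℝⁿ` have derivatives `L` and `-L`
within `s` at `z0`, both send `z0` to `xbar`, and `f` is constant (equal to `f xbar`) along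
both, then any regular subgradient `v` of `f` at `xbar` is orthogonal to the range of `L`. -/
lemma core_aux {n : ℕ} {f : EuclideanSpace ℝ (Fin n) → ℝ}
    {xbar v : EuclideanSpace ℝ (Fin n)}
    (hv : IsRegularSubgradient f xbar v)
    {E : Type*} [NormedAddCommGroup E] [NormedSpace ℝ E]
    {s : Set E} {z0 : E} (hs : UniqueDiffWithinAt ℝ s z0)
    {ψ ψ' : E → EuclideanSpace ℝ (Fin n)} {L : E →L[ℝ] EuclideanSpace ℝ (Fin n)}
    (hψ : HasFDerivWithinAt ψ L s z0) (hψ' : HasFDerivWithinAt ψ' (-L) s z0)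
    (hψ0 : ψ z0 = xbar) (hψ'0 : ψ' z0 = xbar)
    (hfψ : ∀ z, f (ψ z) = f xbar) (hfψ' : ∀ z, f (ψ' z) = f xbar) :
    ∀ u : E, ⟪v, L u⟫ = 0 := by
  set ℓ : E →L[ℝ] ℝ := (innerSL ℝ v).comp L with hℓdef
  suffices hℓ : ℓ = 0 by
    intro u
    have h := ContinuousLinearMap.ext_iff.mp hℓ u
    rw [hℓdef] at h
    simpa only [ContinuousLinearMap.comp_apply, innerSL_apply_apply,
      ContinuousLinearMap.zero_apply] using h
  have key : (fun z => ℓ z - ℓ z0) =o[nhdsWithin z0 s] fun z => z - z0 := by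
    rw [Asymptotics.isLittleO_iff]
    intro c hc
    set K : ℝ := ‖L‖ + 1 + ‖v‖ with hK
    have hKpos : (0:ℝ) < K + 1 := by positivity
    set ε : ℝ := min 1 (c / (K + 1)) with hε
    have hεpos : 0 < ε := lt_min one_pos (div_pos hc hKpos)
    have hε1 : ε ≤ 1 := min_le_left _ _
    have hεc : ε * (K + 1) ≤ c := by
      rw [← le_div_iff₀ hKpos]; exact min_le_right _ _
    obtain ⟨δ, hδpos, hδ⟩ := hv ε hεpos
    have E1 : ∀ᶠ z in nhdsWithin z0 s, ‖ψ z - ψ z0 - L (z - z0)‖ ≤ ε * ‖z - z0‖ :=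
      hψ.isLittleO.def hεpos
    have E2 : ∀ᶠ z in nhdsWithin z0 s, ‖ψ' z - ψ' z0 - (-L) (z - z0)‖ ≤ ε * ‖z - z0‖ :=
      hψ'.isLittleO.def hεpos
    have C1 : ∀ᶠ z in nhdsWithin z0 s, ψ z ∈ Metric.closedBall xbar δ := by
      have hc1 : ContinuousWithinAt ψ s z0 := hψ.continuousWithinAt
      rw [ContinuousWithinAt, hψ0] at hc1
      exact hc1 (Metric.closedBall_mem_nhds xbar hδpos)
    have C2 : ∀ᶠ z in nhdsWithin z0 s, ψ' z ∈ Metric.closedBall xbar δ := by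
      have hc2 : ContinuousWithinAt ψ' s z0 := hψ'.continuousWithinAt
      rw [ContinuousWithinAt, hψ'0] at hc2
      exact hc2 (Metric.closedBall_mem_nhds xbar hδpos)
    filter_upwards [E1, E2, C1, C2] with z h1 h2 h3 h4
    have key1 : ⟪v, ψ z - xbar⟫ ≤ ε * ‖ψ z - xbar‖ := by
      have := hδ (ψ z) (by simpa [Metric.mem_closedBall, dist_eq_norm] using h3)
      rw [hfψ z] at this; linarith
    have key2 : ⟪v, ψ' z - xbar⟫ ≤ ε * ‖ψ' z - xbar‖ := by
      have := hδ (ψ' z) (by simpa [Metric.mem_closedBall, dist_eq_norm] using h4)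
      rw [hfψ' z] at this; linarith
    have e1 : ‖(ψ z - xbar) - L (z - z0)‖ ≤ ε * ‖z - z0‖ := by
      rw [hψ0] at h1; exact h1
    have e2 : ‖(ψ' z - xbar) - (-L) (z - z0)‖ ≤ ε * ‖z - z0‖ := by
      rw [hψ'0] at h2; exact h2
    have up : ⟪v, L (z - z0)⟫ ≤ ε * K * ‖z - z0‖ :=
      inner_bound_aux v (ψ z - xbar) L (z - z0) ε hεpos.le hε1 key1 e1
    have low : ⟪v, (-L) (z - z0)⟫ ≤ ε * (‖(-L)‖ + 1 + ‖v‖) * ‖z - z0‖ :=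
      inner_bound_aux v (ψ' z - xbar) (-L) (z - z0) ε hεpos.le hε1 key2 e2
    rw [norm_neg] at low
    have hlz : ℓ z - ℓ z0 = ⟪v, L (z - z0)⟫ := by
      rw [hℓdef]
      simp only [ContinuousLinearMap.comp_apply, innerSL_apply_apply]
      rw [map_sub, inner_sub_right]
    have hneg : ⟪v, (-L) (z - z0)⟫ = -⟪v, L (z - z0)⟫ := by
      rw [ContinuousLinearMap.neg_apply, inner_neg_right]
    rw [hneg, ← hK] at low
    have hz5 : (0:ℝ) ≤ ‖z - z0‖ := norm_nonneg _
    have hb1 : ε * K * ‖z - z0‖ ≤ c * ‖z - z0‖ := by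
      apply mul_le_mul_of_nonneg_right _ hz5
      nlinarith
    rw [Real.norm_eq_abs, abs_le]
    constructor
    · rw [hlz]; linarith
    · rw [hlz]; linarith
  have hφℓ : HasFDerivWithinAt (fun z => ℓ z - ℓ z0) ℓ s z0 :=
    (ℓ.hasFDerivAt.sub_const (ℓ z0)).hasFDerivWithinAt
  have hφ0 : HasFDerivWithinAt (fun z => ℓ z - ℓ z0) (0 : E →L[ℝ] ℝ) s z0 := by
    refine HasFDerivAtFilter.of_isLittleO ?_
    simpa [Function.comp_def] using key
  exact hs.eq hφℓ hφ0

theorem stmt_15 {n : ℕ}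
    {E : Type*} [NormedAddCommGroup E] [NormedSpace ℝ E] [FiniteDimensional ℝ E]
    {H : Type*} [TopologicalSpace H] {I : ModelWithCorners ℝ E H}
    {G : Type*} [TopologicalSpace G] [ChartedSpace H G] [Group G] [LieGroup I (⊤ : ℕ∞) G]
    (θ : G → EuclideanSpace ℝ (Fin n) → EuclideanSpace ℝ (Fin n))
    (hsmooth : ContMDiff (I.prod 𝓘(ℝ, EuclideanSpace ℝ (Fin n)))
      𝓘(ℝ, EuclideanSpace ℝ (Fin n)) (⊤ : ℕ∞) (fun p : G × EuclideanSpace ℝ (Fin n) => θ p.1 p.2))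
    (hmul : ∀ g h x, θ (g * h) x = θ g (θ h x))
    (hone : ∀ x, θ 1 x = x)
    (f : EuclideanSpace ℝ (Fin n) → ℝ)
    (hinv : ∀ g x, f (θ g x) = f x)
    (xbar v : EuclideanSpace ℝ (Fin n))
    (hv : IsRegularSubgradient f xbar v) :
    ∀ w ∈ orbitTangent I θ xbar, ⟪v, w⟫ = 0 := by
  classical
  intro w hw
  obtain ⟨u, hu⟩ := hw
  rw [← hu]
  -- the orbit map and its inverse-composed version
  set c : G → EuclideanSpace ℝ (Fin n) := fun g => θ g xbar with hc
  have hcs : ContMDiff I 𝓘(ℝ, EuclideanSpace ℝ (Fin n)) (⊤ : ℕ∞) c :=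
    hsmooth.comp (contMDiff_id.prodMk contMDiff_const)
  have hinvs : ContMDiff I I (⊤ : ℕ∞) (fun g : G => g⁻¹) := contMDiff_inv I _
  have hc's : ContMDiff I 𝓘(ℝ, EuclideanSpace ℝ (Fin n)) (⊤ : ℕ∞) (fun g : G => c g⁻¹) :=
    hcs.comp hinvs
  -- differentiability facts
  have hmulM : MDifferentiableAt (I.prod I) I (fun p : G × G => p.1 * p.2) ((1:G), (1:G)) :=
    (contMDiff_mul I ((⊤ : ℕ∞) : WithTop ℕ∞)).mdifferentiableAt (by simp)
  have hinvM : MDifferentiableAt I I (fun g : G => g⁻¹) (1:G) :=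
    hinvs.mdifferentiableAt (by simp)
  have hcM : MDifferentiableAt I 𝓘(ℝ, EuclideanSpace ℝ (Fin n)) c 1 :=
    hcs.mdifferentiableAt (by simp)
  set M : (E × E) →L[ℝ] E :=
    mfderiv (I.prod I) I (fun p : G × G => p.1 * p.2) ((1:G), (1:G)) with hM
  set J : E →L[ℝ] E := mfderiv I I (fun g : G => g⁻¹) (1:G) with hJdef
  set L : E →L[ℝ] EuclideanSpace ℝ (Fin n) :=
    mfderiv I 𝓘(ℝ, EuclideanSpace ℝ (Fin n)) (fun g => θ g xbar) (1:G) with hLdef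
  -- M ∘ inl = id
  have hMinl : M.comp (ContinuousLinearMap.inl ℝ E E) = ContinuousLinearMap.id ℝ E := by
    have hpair : MDifferentiableAt I (I.prod I) (fun g : G => (g, (1:G))) 1 :=
      mdifferentiableAt_id.prodMk mdifferentiableAt_const
    have h := mfderiv_comp_of_eq (I' := I.prod I) hmulM hpair rfl
    rw [mfderiv_prod_left] at h
    have hid : ((fun p : G × G => p.1 * p.2) ∘ fun g : G => (g, (1:G))) = id := by
      funext g; simp
    rw [hid, mfderiv_id] at h
    exact h.symm
  -- M ∘ inr = id
  have hMinr : M.comp (ContinuousLinearMap.inr ℝ E E) = ContinuousLinearMap.id ℝ E := by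
    have hpair : MDifferentiableAt I (I.prod I) (fun g : G => ((1:G), g)) 1 :=
      mdifferentiableAt_const.prodMk mdifferentiableAt_id
    have h := mfderiv_comp_of_eq (I' := I.prod I) hmulM hpair rfl
    rw [mfderiv_prod_right] at h
    have hid : ((fun p : G × G => p.1 * p.2) ∘ fun g : G => ((1:G), g)) = id := by
      funext g; simp
    rw [hid, mfderiv_id] at h
    exact h.symm
  -- M ∘ (id, J) = 0
  have hpairD : mfderiv I (I.prod I) (fun g : G => (g, g⁻¹)) 1 =
      (ContinuousLinearMap.id ℝ E).prod J := by
    have h2 := mdifferentiableAt_id.mfderiv_prod (I' := I) (I'' := I) hinvM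
    rw [mfderiv_id] at h2
    exact h2
  have hMJ : M.comp ((ContinuousLinearMap.id ℝ E).prod J) = 0 := by
    have hpair : MDifferentiableAt I (I.prod I) (fun g : G => (g, g⁻¹)) 1 :=
      mdifferentiableAt_id.prodMk hinvM
    have hpairH : HasMFDerivAt I (I.prod I) (fun g : G => (g, g⁻¹)) 1
        ((ContinuousLinearMap.id ℝ E).prod J) := by
      have h := hpair.hasMFDerivAt
      rwa [hpairD] at h
    have hmulH' : HasMFDerivAt (I.prod I) I (fun p : G × G => p.1 * p.2)
        ((1:G), (1:G)⁻¹) M := by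
      rw [show ((1:G), (1:G)⁻¹) = ((1:G), (1:G)) by simp]
      exact hmulM.hasMFDerivAt
    have h1 : HasMFDerivAt I I (fun g : G => g * g⁻¹) 1
        (M.comp ((ContinuousLinearMap.id ℝ E).prod J)) := hmulH'.comp 1 hpairH
    have h2 : HasMFDerivAt I I (fun g : G => g * g⁻¹) 1 0 := by
      have hfun : (fun g : G => g * g⁻¹) = fun _ : G => (1:G) := by funext g; simp
      rw [hfun]
      exact hasMFDerivAt_const _ _
    exact hasMFDerivAt_unique h1 h2
  -- hence J = -id
  have hJ : ∀ x : E, J x = -x := by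
    intro x
    have h0 : M (x, J x) = 0 := by
      have := ContinuousLinearMap.ext_iff.mp hMJ x
      simpa using this
    have hx1 : M (x, 0) = x := by
      have := ContinuousLinearMap.ext_iff.mp hMinl x
      simpa using this
    have hx2 : M (0, J x) = J x := by
      have := ContinuousLinearMap.ext_iff.mp hMinr (J x)
      simpa using this
    have hsum : M (x, J x) = M (x, 0) + M (0, J x) := by
      rw [← map_add]; congr 1; simp
    rw [h0, hx1, hx2] at hsum
    exact eq_neg_of_add_eq_zero_right hsum.symm
  -- derivative of c ∘ inv at 1 is -L
  have hmc : HasMFDerivAt I 𝓘(ℝ, EuclideanSpace ℝ (Fin n)) c 1 L := hcM.hasMFDerivAt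
  have hcH' : HasMFDerivAt I 𝓘(ℝ, EuclideanSpace ℝ (Fin n)) c ((1:G)⁻¹) L := by
    rw [inv_one]
    exact hmc
  have hinvH : HasMFDerivAt I I (fun g : G => g⁻¹) 1 J := hinvM.hasMFDerivAt
  have hC' : HasMFDerivAt I 𝓘(ℝ, EuclideanSpace ℝ (Fin n)) (fun g : G => c g⁻¹) 1
      (L.comp J) := hcH'.comp 1 hinvH
  have hLJ : L.comp J = -L := by
    ext x
    rw [ContinuousLinearMap.comp_apply, hJ x, map_neg, ContinuousLinearMap.neg_apply]
  have hmc' : HasMFDerivAt I 𝓘(ℝ, EuclideanSpace ℝ (Fin n)) (fun g : G => c g⁻¹) 1 (-L) := by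
    rw [← hLJ]
    exact hC'
  set z0 : E := extChartAt I (1:G) 1 with hz0def
  have hψ : HasFDerivWithinAt
      (writtenInExtChartAt I 𝓘(ℝ, EuclideanSpace ℝ (Fin n)) 1 c) L (Set.range I) z0 := hmc.2
  have hψ' : HasFDerivWithinAt
      (writtenInExtChartAt I 𝓘(ℝ, EuclideanSpace ℝ (Fin n)) 1 (fun g : G => c g⁻¹)) (-L)
      (Set.range I) z0 := hmc'.2
  have hmem1 : (1:G) ∈ (extChartAt I (1:G)).source := mem_extChartAt_source 1
  have hψ0 : writtenInExtChartAt I 𝓘(ℝ, EuclideanSpace ℝ (Fin n)) 1 c z0 = xbar := by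
    simp only [writtenInExtChartAt, Function.comp_apply, hz0def,
      (extChartAt I (1:G)).left_inv hmem1, extChartAt_model_space_eq_id,
      PartialEquiv.refl_coe, id_eq]
    simp [hc, hone]
  have hψ'0 : writtenInExtChartAt I 𝓘(ℝ, EuclideanSpace ℝ (Fin n)) 1
      (fun g : G => c g⁻¹) z0 = xbar := by
    simp only [writtenInExtChartAt, Function.comp_apply, hz0def,
      (extChartAt I (1:G)).left_inv hmem1, extChartAt_model_space_eq_id,
      PartialEquiv.refl_coe, id_eq]
    simp [hc, hone]
  have hfψ : ∀ z, f (writtenInExtChartAt I 𝓘(ℝ, EuclideanSpace ℝ (Fin n)) 1 c z) = f xbar := by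
    intro z
    simp only [writtenInExtChartAt, Function.comp_apply, extChartAt_model_space_eq_id,
      PartialEquiv.refl_coe, id_eq]
    simp [hc, hinv]
  have hfψ' : ∀ z, f (writtenInExtChartAt I 𝓘(ℝ, EuclideanSpace ℝ (Fin n)) 1
      (fun g : G => c g⁻¹) z) = f xbar := by
    intro z
    simp only [writtenInExtChartAt, Function.comp_apply, extChartAt_model_space_eq_id,
      PartialEquiv.refl_coe, id_eq]
    simp [hc, hinv]
  have hz0mem : z0 ∈ Set.range I :=
    extChartAt_target_subset_range 1 ((extChartAt I (1:G)).map_source hmem1)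
  have huniq : UniqueDiffWithinAt ℝ (Set.range I) z0 := I.uniqueDiffOn z0 hz0mem
  exact core_aux hv huniq hψ hψ' hψ0 hψ'0 hfψ hfψ' u
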